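/- For integers 0 ≤ i ≤ j+2, the path matching polynomials satisfy p_{i-1}(x)·p_{j+1}(x) − p_i(x)·p_j(x) = (−1)^{i-1} · x^i · p_{j−i}(x). -/

import Mathlib

open Polynomial LaurentPolynomial

/-- Matching generating polynomial of the path on `k` vertices, via its recurrence. -/
noncomputable def ppoly : ℕ → Polynomial ℚ
  | 0 => 1
  | 1 => 1
  | (k+2) => ppoly (k+1) + Polynomial.X * ppoly k

/-- Extension of `ppoly` to integer indices, with `p_{-1} = 0` (and `0` below that). -/
noncomputable def pz (k : ℤ) : Polynomial ℚ := if 0 ≤ k then ppoly k.toNat else 0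

/-- The path matching polynomials extended to integer indices as Laurent polynomials,
with the conventions `p_{-1} = 0` and `p_{-2} = 1/x`. -/
noncomputable def pL (k : ℤ) : LaurentPolynomial ℚ :=
  if k = -2 then LaurentPolynomial.T (-1)
  else if k < 0 then 0
  else Polynomial.toLaurent (ppoly k.toNat)

lemma pL_neg1 : pL (-1) = 0 := by norm_num [pL]

lemma pL_zero : pL 0 = 1 := by norm_num [pL]; simp [ppoly]

lemma pL_one : pL 1 = 1 := by norm_num [pL]; simp [ppoly]

lemma pL_rec (k : ℤ) (hk : -2 ≤ k) : pL (k + 2) = pL (k + 1) + T 1 * pL k := by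
  rcases eq_or_lt_of_le hk with h | h
  · rw [← h]
    norm_num [pL_zero, pL_neg1]
    have : pL (-2) = T (-1) := by norm_num [pL]
    rw [this, ← T_add]
    norm_num
  rcases eq_or_lt_of_le (by omega : (-1 : ℤ) ≤ k) with h1 | h1
  · rw [← h1]
    norm_num [pL_one, pL_zero, pL_neg1]
  lift k to ℕ using (by omega : (0:ℤ) ≤ k) with n
  have h2 : ((n:ℤ) + 2).toNat = n + 2 := by omega
  have h1' : ((n:ℤ) + 1).toNat = n + 1 := by omega
  have e2 : pL ((n:ℤ) + 2) = Polynomial.toLaurent (ppoly (n+2)) := by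
    rw [pL]; rw [if_neg (by omega), if_neg (by omega), h2]
  have e1 : pL ((n:ℤ) + 1) = Polynomial.toLaurent (ppoly (n+1)) := by
    rw [pL]; rw [if_neg (by omega), if_neg (by omega), h1']
  have e0 : pL (n:ℤ) = Polynomial.toLaurent (ppoly n) := by
    rw [pL]; rw [if_neg (by omega), if_neg (by omega), Int.toNat_natCast]
  rw [e2, e1, e0, show ppoly (n+2) = ppoly (n+1) + Polynomial.X * ppoly n from rfl]
  simp [Polynomial.toLaurent_X]

/-- For integers `0 ≤ i ≤ j+2`:
`p_{i-1} p_{j+1} − p_i p_j = (−1)^{i-1} x^i p_{j−i}`. -/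
theorem pL_product_identity (i : ℕ) (j : ℤ) (hij : (i : ℤ) ≤ j + 2) :
    pL ((i : ℤ) - 1) * pL (j + 1) - pL i * pL j =
      (-1) ^ (i + 1) * LaurentPolynomial.T (i : ℤ) * pL (j - i) := by
  induction i generalizing j with
  | zero => simp [pL_neg1, pL_zero]
  | succ i ih =>
    have hj1 : (i : ℤ) ≤ (j - 1) + 2 := by push_cast at hij ⊢; omega
    have IH := ih (j - 1) hj1
    rw [show j - 1 + 1 = j by ring] at IH
    have hrj : pL (j + 1) = pL j + T 1 * pL (j - 1) := by
      have := pL_rec (j - 1) (by push_cast at hij; omega)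
      rw [show j - 1 + 2 = j + 1 by ring, show j - 1 + 1 = j by ring] at this
      exact this
    have hri : pL ((i : ℤ) + 1) = pL i + T 1 * pL ((i : ℤ) - 1) := by
      have := pL_rec ((i : ℤ) - 1) (by omega)
      rw [show (i:ℤ) - 1 + 2 = (i:ℤ) + 1 by ring, show (i:ℤ) - 1 + 1 = (i:ℤ) by ring] at this
      exact this
    have hc : ((i + 1 : ℕ) : ℤ) = (i : ℤ) + 1 := by push_cast; ring
    rw [hc, show (i : ℤ) + 1 - 1 = i by ring, hrj, hri,
      show j - ((i : ℤ) + 1) = (j - 1) - i by ring,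
      show T ((i:ℤ) + 1) = T (i:ℤ) * T 1 from (T_add _ _)]
    have expand : pL i * (pL j + T 1 * pL (j - 1)) - (pL i + T 1 * pL ((i:ℤ) - 1)) * pL j
        = -(T 1) * (pL ((i:ℤ) - 1) * pL j - pL i * pL (j - 1)) := by ring
    rw [expand, IH]
    ring
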